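/- Let H be a complex Hilbert space and A, B ∈ B(H). Suppose that for every vector ψ ∈ H there exists a complex number λ_ψ with |λ_ψ| = 1 such that (A∘B)ψ = λ_ψ • (B∘A)ψ. Then there exists a single complex number λ with |λ| = 1 such that A∘B = λ • (B∘A); equivalently, there exists φ ∈ ℝ with [A,B]_φ = 0. -/

import Mathlib

/-- Auxiliary: if `T ψ` is pointwise a scalar multiple of `S ψ`, the scalars at two
points with nonzero `S`-image agree. -/
lemma aux_scalar_eq {H : Type*} [NormedAddCommGroup H] [InnerProductSpace ℂ H]
    (T S : H →L[ℂ] H)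
    (h : ∀ ψ : H, ∃ lam : ℂ, T ψ = lam • S ψ)
    {x y : H} (hx : S x ≠ 0) (hy : S y ≠ 0)
    {lx ly : ℂ} (hTx : T x = lx • S x) (hTy : T y = ly • S y) :
    lx = ly := by
  by_cases hdep : ∃ μ : ℂ, S y = μ • S x
  · obtain ⟨μ, hμ⟩ := hdep
    have hμ0 : μ ≠ 0 := by
      rintro rfl
      simp at hμ
      exact hy hμ
    obtain ⟨l, hl⟩ := h (y - μ • x)
    have hS0 : S (y - μ • x) = 0 := by
      simp [map_sub, map_smul, hμ]
    have h2 : T y - μ • T x = 0 := by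
      have := hl
      rw [hS0, smul_zero, map_sub, map_smul] at this
      exact this
    rw [hTx, hTy, hμ] at h2
    have h3 : (ly * μ - μ * lx) • S x = 0 := by
      rw [sub_smul, mul_smul, mul_smul]
      exact h2
    rcases smul_eq_zero.mp h3 with h4 | h4
    · have h5 : ly * μ = μ * lx := sub_eq_zero.mp h4
      rw [mul_comm ly μ] at h5
      exact (mul_left_cancel₀ hμ0 h5).symm
    · exact absurd h4 hx
  · push_neg at hdep
    obtain ⟨lz, hz⟩ := h (x + y)
    have e : lz • S x + lz • S y = lx • S x + ly • S y := by
      have : T x + T y = lz • (S x + S y) := by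
        rw [← map_add, ← map_add]; exact hz
      rw [hTx, hTy, smul_add] at this
      exact this.symm
    have e2 : (lz - lx) • S x = (ly - lz) • S y := by
      rw [sub_smul, sub_smul, sub_eq_sub_iff_add_eq_add, e, add_comm]
    by_cases hly : ly = lz
    · subst hly
      rw [sub_self, zero_smul] at e2
      rcases smul_eq_zero.mp e2 with h4 | h4
      · exact (sub_eq_zero.mp h4).symm
      · exact absurd h4 hx
    · have hne : ly - lz ≠ 0 := sub_ne_zero.mpr hly
      have : S y = ((ly - lz)⁻¹ * (lz - lx)) • S x := by
        rw [mul_smul, e2, inv_smul_smul₀ hne]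
      exact absurd this (hdep _)

theorem pointwise_unimodular_to_global_anyonic_commutation
    {H : Type*} [NormedAddCommGroup H] [InnerProductSpace ℂ H] [CompleteSpace H]
    (A B : H →L[ℂ] H)
    (h : ∀ ψ : H, ∃ lam : ℂ, ‖lam‖ = 1 ∧ (A ∘L B) ψ = lam • ((B ∘L A) ψ)) :
    (∃ lam : ℂ, ‖lam‖ = 1 ∧ A ∘L B = lam • (B ∘L A)) ∧
      (∃ φ : ℝ, A ∘L B - Complex.exp (φ * Complex.I) • (B ∘L A) = 0) := by
  set T := A ∘L B with hT
  set S := B ∘L A with hS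
  have h' : ∀ ψ : H, ∃ lam : ℂ, T ψ = lam • S ψ := fun ψ => by
    obtain ⟨l, _, hl⟩ := h ψ; exact ⟨l, hl⟩
  have key : ∃ lam : ℂ, ‖lam‖ = 1 ∧ T = lam • S := by
    by_cases hS0 : ∀ ψ, S ψ = 0
    · refine ⟨1, by simp, ?_⟩
      ext ψ
      obtain ⟨l, _, hl⟩ := h ψ
      simp [hl, hS0 ψ]
    · push_neg at hS0
      obtain ⟨x0, hx0⟩ := hS0
      obtain ⟨l0, hl0, hTx0⟩ := h x0
      refine ⟨l0, hl0, ?_⟩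
      ext y
      obtain ⟨ly, hly, hTy⟩ := h y
      by_cases hSy : S y = 0
      · simp [hTy, hSy]
      · have := aux_scalar_eq T S h' hx0 hSy hTx0 hTy
        simp [hTy, ← this]
  obtain ⟨lam, hnorm, heq⟩ := key
  refine ⟨⟨lam, hnorm, heq⟩, ⟨Complex.arg lam, ?_⟩⟩
  have habs : ‖lam‖ = 1 := by exact hnorm
  have hexp : Complex.exp (Complex.arg lam * Complex.I) = lam := by
    have := Complex.norm_mul_exp_arg_mul_I lam
    rwa [habs, Complex.ofReal_one, one_mul] at this
  rw [hexp, heq, sub_self]
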